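/- In the setting of the previous approximation lemma, if additionally each μ^ε is an invariant measure for P^ε (i.e., μ^ε P^ε = μ^ε), then the weak limit μ is an invariant measure for P: μP = μ. -/

import Mathlib

open MeasureTheory ProbabilityTheory Filter ENNReal Topology
open scoped NNReal

/-- Bochner-integral version of the bind formula for nonnegative bounded continuous functions. -/
lemma integral_bind_of_nonneg' {α : Type*} [MeasurableSpace α] [TopologicalSpace α]
    [SecondCountableTopology α] [BorelSpace α]
    (m : Measure α) [IsProbabilityMeasure m] (κ : Kernel α α) [IsMarkovKernel κ]
    (φ : α → ℝ) (hc : Continuous φ) (hnn : ∀ x, 0 ≤ φ x) {C : ℝ} (hb : ∀ x, |φ x| ≤ C) :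
    ∫ v, φ v ∂(m.bind (fun u => κ u)) = ∫ u, ∫ v, φ v ∂(κ u) ∂m := by
  set Φ : BoundedContinuousFunction α ℝ :=
    BoundedContinuousFunction.ofNormedAddCommGroup φ hc C (fun x => by
      simpa [Real.norm_eq_abs] using hb x) with hΦ
  have hκmeas : Measurable fun u => (κ u : Measure α) := κ.measurable
  have hbindprob : IsProbabilityMeasure (m.bind (fun u => κ u)) := by
    constructor
    rw [Measure.bind_apply MeasurableSet.univ hκmeas.aemeasurable]
    simp
  have hmeasφ : Measurable φ := hc.measurable
  have hPmeas : StronglyMeasurable fun u => ∫ v, φ v ∂(κ u) := by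
    have : StronglyMeasurable (Function.uncurry fun (_ : α) (v : α) => φ v) :=
      (hc.comp continuous_snd).stronglyMeasurable
    exact this.integral_kernel_prod_right
  have hPint : Integrable (fun u => ∫ v, φ v ∂(κ u)) m := by
    refine Integrable.mono' (integrable_const C) hPmeas.aestronglyMeasurable ?_
    refine Filter.Eventually.of_forall fun u => ?_
    rw [Real.norm_eq_abs, abs_le]
    constructor
    · have : 0 ≤ ∫ v, φ v ∂(κ u) := integral_nonneg hnn
      have hC : 0 ≤ C := le_trans (abs_nonneg _) (hb u)
      linarith
    · calc ∫ v, φ v ∂(κ u) ≤ ∫ _, C ∂(κ u) :=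
            integral_mono (Φ.integrable _) (integrable_const C) (fun v => le_of_abs_le (hb v))
        _ = C := by simp
  have h1 : ∫ v, φ v ∂(m.bind (fun u => κ u))
      = (∫⁻ v, ENNReal.ofReal (φ v) ∂(m.bind (fun u => κ u))).toReal := by
    rw [integral_eq_lintegral_of_nonneg_ae (Filter.Eventually.of_forall hnn)
      hc.aestronglyMeasurable]
  have h2 : ∫⁻ v, ENNReal.ofReal (φ v) ∂(m.bind (fun u => κ u))
      = ∫⁻ u, ∫⁻ v, ENNReal.ofReal (φ v) ∂(κ u) ∂m :=
    Measure.lintegral_bind hκmeas.aemeasurable hmeasφ.ennreal_ofReal.aemeasurable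
  have h3 : ∀ u, ∫⁻ v, ENNReal.ofReal (φ v) ∂(κ u) = ENNReal.ofReal (∫ v, φ v ∂(κ u)) :=
    fun u => (ofReal_integral_eq_lintegral_ofReal (Φ.integrable _)
      (Filter.Eventually.of_forall hnn)).symm
  have h4 : ∫⁻ u, ENNReal.ofReal (∫ v, φ v ∂(κ u)) ∂m
      = ENNReal.ofReal (∫ u, ∫ v, φ v ∂(κ u) ∂m) :=
    (ofReal_integral_eq_lintegral_ofReal hPint
      (Filter.Eventually.of_forall fun u => integral_nonneg hnn)).symm
  rw [h1, h2]
  simp_rw [h3]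
  rw [h4, ENNReal.toReal_ofReal (integral_nonneg fun u => integral_nonneg hnn)]

/-- Two finite Borel measures on a metric space with equal total mass agree if integrals of all
nonnegative bounded Lipschitz functions agree. -/
lemma ext_of_lipschitz_integral_eq {α : Type*} [MetricSpace α] [MeasurableSpace α] [BorelSpace α]
    (νm μm : Measure α) [IsFiniteMeasure νm] [IsFiniteMeasure μm]
    (huniv : νm Set.univ = μm Set.univ)
    (h : ∀ φ : α → ℝ, Continuous φ → (∃ L, LipschitzWith L φ) → (∃ C, ∀ x, |φ x| ≤ C) →
      (∀ x, 0 ≤ φ x) → ∫ x, φ x ∂νm = ∫ x, φ x ∂μm) : νm = μm := by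
  have key : ∀ F : Set α, IsClosed F → νm F = μm F := by
    intro F hF
    rcases F.eq_empty_or_nonempty with hFe | hFne
    · simp [hFe]
    set φseq : ℕ → α → ℝ := fun n x => max (1 - (n : ℝ) * Metric.infDist x F) 0 with hφseq
    have houter : ∀ n : ℕ, LipschitzWith (n : ℝ≥0) (fun t : ℝ => max (1 - (n : ℝ) * t) 0) := by
      intro n
      refine LipschitzWith.of_dist_le_mul fun a b => ?_
      rw [Real.dist_eq, Real.dist_eq]
      calc |max (1 - (n:ℝ)*a) 0 - max (1 - (n:ℝ)*b) 0| ≤ |(1 - (n:ℝ)*a) - (1 - (n:ℝ)*b)| :=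
            abs_max_sub_max_le_abs _ _ _
        _ = (n:ℝ) * |a - b| := by
            rw [show (1 - (n:ℝ)*a) - (1 - (n:ℝ)*b) = (n:ℝ) * (b - a) by ring, abs_mul,
              Nat.abs_cast, abs_sub_comm]
    have hlip : ∀ n : ℕ, LipschitzWith ((n : ℝ≥0) * 1) (φseq n) := by
      intro n
      exact (houter n).comp (Metric.lipschitz_infDist_pt F)
    have hcont : ∀ n, Continuous (φseq n) := fun n => (hlip n).continuous
    have hnn : ∀ n x, 0 ≤ φseq n x := fun n x => le_max_right _ _
    have hb : ∀ n x, |φseq n x| ≤ 1 := by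
      intro n x
      rw [abs_of_nonneg (hnn n x)]
      refine max_le ?_ zero_le_one
      have : 0 ≤ (n : ℝ) * Metric.infDist x F :=
        mul_nonneg (Nat.cast_nonneg n) Metric.infDist_nonneg
      linarith
    have hlim : ∀ x, Tendsto (fun n => φseq n x) atTop (𝓝 (F.indicator (fun _ => (1:ℝ)) x)) := by
      intro x
      by_cases hx : x ∈ F
      · have : ∀ n, φseq n x = 1 := by
          intro n
          simp [hφseq, Metric.infDist_zero_of_mem hx]
        rw [Set.indicator_of_mem hx]
        simpa [this] using tendsto_const_nhds
      · have hd : 0 < Metric.infDist x F := (hF.notMem_iff_infDist_pos hFne).mp hx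
        rw [Set.indicator_of_notMem hx]
        obtain ⟨N, hN⟩ := exists_nat_ge (1 / Metric.infDist x F)
        refine Tendsto.congr' ?_ (tendsto_const_nhds (x := (0:ℝ)))
        rw [Filter.eventuallyEq_iff_exists_mem]
        refine ⟨Set.Ici N, Filter.mem_atTop N, fun n hn => ?_⟩
        have h1 : (1:ℝ) ≤ (n : ℝ) * Metric.infDist x F := by
          have hn' : (1 / Metric.infDist x F) ≤ (n : ℝ) :=
            le_trans hN (Nat.cast_le.mpr hn)
          rw [div_le_iff₀ hd] at hn'
          linarith [hn']
        simp only [hφseq]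
        rw [max_eq_right (by linarith)]
    have hDCT : ∀ (ρ : Measure α) [IsFiniteMeasure ρ],
        Tendsto (fun n => ∫ x, φseq n x ∂ρ) atTop (𝓝 ((ρ F).toReal)) := by
      intro ρ _
      have := tendsto_integral_of_dominated_convergence (μ := ρ) (fun _ => (1:ℝ))
        (fun n => (hcont n).aestronglyMeasurable) (integrable_const 1)
        (fun n => Filter.Eventually.of_forall fun x => by
          simpa [Real.norm_eq_abs] using hb n x)
        (Filter.Eventually.of_forall hlim)
      have hind : ∫ x, F.indicator (fun _ => (1:ℝ)) x ∂ρ = (ρ F).toReal := by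
        rw [integral_indicator_const (1:ℝ) hF.measurableSet]
        simp
        rfl
      rwa [hind] at this
    have hEq : ∀ n, ∫ x, φseq n x ∂νm = ∫ x, φseq n x ∂μm := fun n =>
      h (φseq n) (hcont n) ⟨_, hlip n⟩ ⟨1, hb n⟩ (hnn n)
    have h1 := hDCT νm
    have h2 := hDCT μm
    simp_rw [hEq] at h1
    have htoReal : (νm F).toReal = (μm F).toReal := tendsto_nhds_unique h1 h2
    exact (ENNReal.toReal_eq_toReal_iff' (measure_ne_top _ _) (measure_ne_top _ _)).mp htoReal
  refine MeasureTheory.ext_of_generate_finite _ ?_ isPiSystem_isClosed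
    (fun F hFc => key F hFc) huniv
  rw [BorelSpace.measurable_eq (α := α), borel_eq_generateFrom_isClosed]

/-- Extension of an increasing continuous `ψ : [0,∞) → [0,∞)` to `[0,∞]` with `ψ(∞) = ∞`. -/
noncomputable def extPsi (ψ : ℝ → ℝ) : ENNReal → ENNReal :=
  fun x => if x = ⊤ then ⊤ else ENNReal.ofReal (ψ x.toReal)

/-- Corollary A.2.  In the setting of the approximation Lemma A.1, if additionally each
`με ε` is an invariant probability measure for `Pe ε` (`με Pe = με`), then any weak-in-`H`
subsequential limit `μ` of the `με ε` is an invariant measure for `P`: `μ P = μ`. -/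
theorem limit_invariant_measure_corollary
    {H : Type*} [NormedAddCommGroup H] [NormedSpace ℝ H] [CompleteSpace H]
    [SecondCountableTopology H] [MeasurableSpace H] [BorelSpace H]
    (nV : H → ENNReal)
    (f : ℕ → H → ℝ) (hfc : ∀ n, Continuous (f n)) (hfnn : ∀ n u, 0 ≤ f n u)
    (hflim : ∀ u, Tendsto (fun n => ENNReal.ofReal (f n u)) atTop (nhds (nV u)))
    (hcpt : ∀ R : ENNReal, R ≠ ⊤ → IsCompact (closure {u | nV u ≤ R}))
    (P : ProbabilityTheory.Kernel H H) [IsMarkovKernel P]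
    (hPV : ∀ u : H, nV u ≠ ⊤ → P u {v | nV v = ⊤} = 0)
    (hFeller : ∀ φ : H → ℝ, Continuous φ → (∃ Cφ : ℝ, ∀ x, |φ x| ≤ Cφ) →
      Continuous fun u => ∫ v, φ v ∂(P u))
    (Pe : ℝ → ProbabilityTheory.Kernel H H)
    (hPe : ∀ ε : ℝ, 0 < ε → IsMarkovKernel (Pe ε))
    (hPeV : ∀ ε : ℝ, 0 < ε → ∀ u : H, nV u ≠ ⊤ → Pe ε u {v | nV v = ⊤} = 0)
    (hconv : ∀ φ : H → ℝ, (∃ Cφ : ℝ, ∀ x, |φ x| ≤ Cφ) → (∃ Lip, LipschitzWith Lip φ) →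
      ∀ R : ENNReal, R ≠ ⊤ → ∀ δ : ℝ, 0 < δ →
        ∀ᶠ ε in 𝓝[>] (0 : ℝ), ∀ u : H, nV u ≤ R →
          |(∫ v, φ v ∂(Pe ε u)) - ∫ v, φ v ∂(P u)| ≤ δ)
    (ψ : ℝ → ℝ) (hψmono : Monotone ψ) (hψcont : Continuous ψ)
    (hψnn : ∀ r, 0 ≤ ψ r) (hψdiv : Tendsto ψ atTop atTop)
    (C₀ : ℝ)
    (με : ℝ → Measure H)
    (hμε : ∀ ε : ℝ, 0 < ε → IsProbabilityMeasure (με ε))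
    (hμεV : ∀ ε : ℝ, 0 < ε → με ε {u | nV u = ⊤} = 0)
    (hmom : ∀ ε : ℝ, 0 < ε → (∫⁻ u, extPsi ψ (nV u) ∂(με ε)) ≤ ENNReal.ofReal C₀)
    (hinv : ∀ ε : ℝ, 0 < ε → (με ε).bind (fun u => Pe ε u) = με ε)
    (μ : Measure H) (hμprob : IsProbabilityMeasure μ)
    (εseq : ℕ → ℝ) (hεpos : ∀ n, 0 < εseq n) (hεlim : Tendsto εseq atTop (nhds 0))
    (hweak : ∀ φ : H → ℝ, Continuous φ → (∃ Cφ : ℝ, ∀ x, |φ x| ≤ Cφ) →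
      Tendsto (fun n => ∫ u, φ u ∂(με (εseq n))) atTop (nhds (∫ u, φ u ∂μ))) :
    μ.bind (fun u => P u) = μ := by
  classical
  have hne : Nonempty H := by
    by_contra hcon
    rw [not_nonempty_iff] at hcon
    have h1 := hμprob.measure_univ
    rw [Set.univ_eq_empty_iff.mpr hcon] at h1
    simp at h1
  have hnV : Measurable nV :=
    measurable_of_tendsto_metrizable (f := fun k u => ENNReal.ofReal (f k u))
      (fun k => (hfc k).measurable.ennreal_ofReal) (tendsto_pi_nhds.mpr hflim)
  have hext : Measurable (extPsi ψ) := by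
    unfold extPsi
    exact Measurable.ite (MeasurableSet.singleton ⊤ : MeasurableSet {x : ENNReal | x = ⊤})
      measurable_const ((hψcont.measurable.comp ENNReal.measurable_toReal).ennreal_ofReal)
  -- key analytic claim
  have key : ∀ φ : H → ℝ, Continuous φ → (∃ L, LipschitzWith L φ) → (∃ C, ∀ x, |φ x| ≤ C) →
      (∀ x, 0 ≤ φ x) → ∫ x, φ x ∂(μ.bind (fun u => P u)) = ∫ x, φ x ∂μ := by
    intro φ hφc hφlip hφbdd hφnn
    obtain ⟨C, hC⟩ := hφbdd
    have hC0 : 0 ≤ C := le_trans (abs_nonneg _) (hC (Classical.arbitrary H))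
    set Pφ : H → ℝ := fun u => ∫ v, φ v ∂(P u) with hPφdef
    have hPφc : Continuous Pφ := hFeller φ hφc ⟨C, hC⟩
    have hPφnn : ∀ u, 0 ≤ Pφ u := fun u => integral_nonneg hφnn
    have hPφb : ∀ u, |Pφ u| ≤ C := by
      intro u
      have := norm_integral_le_of_norm_le_const (μ := P u) (C := C) (f := φ)
        (Filter.Eventually.of_forall fun v => by simpa [Real.norm_eq_abs] using hC v)
      simpa [Real.norm_eq_abs, measure_univ] using this
    rw [integral_bind_of_nonneg' μ P φ hφc hφnn hC]
    have hA : Tendsto (fun n => ∫ u, Pφ u ∂(με (εseq n))) atTop (𝓝 (∫ u, Pφ u ∂μ)) :=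
      hweak Pφ hPφc ⟨C, hPφb⟩
    have hB : Tendsto (fun n => ∫ u, φ u ∂(με (εseq n))) atTop (𝓝 (∫ u, φ u ∂μ)) :=
      hweak φ hφc ⟨C, hC⟩
    have hBB : ∀ n, ∫ u, φ u ∂(με (εseq n))
        = ∫ u, ∫ v, φ v ∂(Pe (εseq n) u) ∂(με (εseq n)) := by
      intro n
      haveI := hμε (εseq n) (hεpos n)
      haveI := hPe (εseq n) (hεpos n)
      conv_lhs => rw [← hinv (εseq n) (hεpos n)]
      exact integral_bind_of_nonneg' _ _ φ hφc hφnn hC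
    have hdiff : Tendsto (fun n => (∫ u, Pφ u ∂(με (εseq n)))
        - ∫ u, ∫ v, φ v ∂(Pe (εseq n) u) ∂(με (εseq n))) atTop (𝓝 0) := by
      rw [NormedAddCommGroup.tendsto_nhds_zero]
      intro δ hδ
      set M : ℝ := max C₀ 0 with hMdef
      have hM0 : 0 ≤ M := le_max_right _ _
      obtain ⟨r, hrK, hr0⟩ :=
        ((hψdiv.eventually_ge_atTop (max 1 (4*(C+1)*(M+1)/δ))).and
          (eventually_ge_atTop (0:ℝ))).exists
      have hψr1 : (1:ℝ) ≤ ψ r := le_trans (le_max_left _ _) hrK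
      have hψrpos : 0 < ψ r := lt_of_lt_of_le one_pos hψr1
      have hψrδ : 4*(C+1)*(M+1)/δ ≤ ψ r := le_trans (le_max_right _ _) hrK
      set R : ENNReal := ENNReal.ofReal r with hRdef
      have hev := hconv φ ⟨C, hC⟩ hφlip R ENNReal.ofReal_ne_top (δ/4) (by positivity)
      have hseqt : Tendsto εseq atTop (𝓝[>] (0:ℝ)) :=
        tendsto_nhdsWithin_of_tendsto_nhds_of_eventually_within εseq hεlim
          (Filter.Eventually.of_forall hεpos)
      filter_upwards [hseqt.eventually hev] with n hn
      haveI := hμε (εseq n) (hεpos n)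
      haveI := hPe (εseq n) (hεpos n)
      set m : Measure H := με (εseq n) with hmdef
      set Pnφ : H → ℝ := fun u => ∫ v, φ v ∂(Pe (εseq n) u) with hPnφdef
      set S : Set H := {u | nV u ≤ R} with hSdef
      have hS : MeasurableSet S := hnV measurableSet_Iic
      have hPnm : StronglyMeasurable Pnφ := by
        have : StronglyMeasurable (Function.uncurry fun (_ : H) (v : H) => φ v) :=
          (hφc.comp continuous_snd).stronglyMeasurable
        exact this.integral_kernel_prod_right
      have hPnb : ∀ u, |Pnφ u| ≤ C := by
        intro u
        have := norm_integral_le_of_norm_le_const (μ := Pe (εseq n) u) (C := C) (f := φ)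
          (Filter.Eventually.of_forall fun v => by simpa [Real.norm_eq_abs] using hC v)
        simpa [Real.norm_eq_abs, measure_univ] using this
      have hPφint : Integrable Pφ m :=
        Integrable.mono' (integrable_const C) hPφc.aestronglyMeasurable
          (Filter.Eventually.of_forall fun u => by simpa [Real.norm_eq_abs] using hPφb u)
      have hPnint : Integrable Pnφ m :=
        Integrable.mono' (integrable_const C) hPnm.aestronglyMeasurable
          (Filter.Eventually.of_forall fun u => by simpa [Real.norm_eq_abs] using hPnb u)
      set g : H → ℝ := fun u => Pφ u - Pnφ u with hgdef
      have hg_int : Integrable g m := hPφint.sub hPnint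
      have hgb : ∀ u, |g u| ≤ δ/4 + Sᶜ.indicator (fun _ => 2*C) u := by
        intro u
        by_cases hu : nV u ≤ R
        · have h5 := hn u hu
          rw [abs_sub_comm] at h5
          rw [Set.indicator_of_notMem (by simpa [hSdef] using hu)]
          simpa [hgdef] using h5
        · rw [Set.indicator_of_mem (by simpa [hSdef] using hu)]
          have h6 : |g u| ≤ |Pφ u| + |Pnφ u| := by
            calc |g u| = |Pφ u + -(Pnφ u)| := by rw [hgdef]; ring_nf
              _ ≤ |Pφ u| + |-(Pnφ u)| := abs_add_le _ _
              _ = |Pφ u| + |Pnφ u| := by rw [abs_neg]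
          have := hPφb u; have := hPnb u
          have hδ4 : 0 ≤ δ/4 := by positivity
          linarith
      have hint_bound : Integrable (fun u => δ/4 + Sᶜ.indicator (fun _ => 2*C) u) m :=
        (integrable_const _).add ((integrable_const (2*C)).indicator hS.compl)
      have h7 : |∫ u, g u ∂m| ≤ ∫ u, (δ/4 + Sᶜ.indicator (fun _ => 2*C) u) ∂m :=
        le_trans (by simpa [Real.norm_eq_abs] using norm_integral_le_integral_norm (μ := m) g)
          (integral_mono hg_int.abs hint_bound hgb)
      have h8 : ∫ u, (δ/4 + Sᶜ.indicator (fun _ => 2*C) u) ∂m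
          = δ/4 + (m Sᶜ).toReal * (2*C) := by
        rw [integral_add (integrable_const _) ((integrable_const (2*C)).indicator hS.compl),
          integral_const, integral_indicator_const _ hS.compl]
        simp [measure_univ, smul_eq_mul]
        left; rfl
      have hsub : Sᶜ ⊆ {u | ENNReal.ofReal (ψ r) ≤ extPsi ψ (nV u)} := by
        intro u hu
        simp only [hSdef, Set.mem_compl_iff, Set.mem_setOf_eq, not_le] at hu
        by_cases htop : nV u = ⊤
        · simp [extPsi, htop]
        · have hr_le : r ≤ (nV u).toReal :=
            (ENNReal.ofReal_le_iff_le_toReal htop).mp hu.le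
          simp only [extPsi, if_neg htop, Set.mem_setOf_eq]
          exact ENNReal.ofReal_le_ofReal (hψmono hr_le)
      have hcheb : ENNReal.ofReal (ψ r) * m Sᶜ ≤ ENNReal.ofReal C₀ := by
        calc ENNReal.ofReal (ψ r) * m Sᶜ
            ≤ ENNReal.ofReal (ψ r) * m {u | ENNReal.ofReal (ψ r) ≤ extPsi ψ (nV u)} :=
              mul_le_mul_right (measure_mono hsub) _
          _ ≤ ∫⁻ u, extPsi ψ (nV u) ∂m :=
              mul_meas_ge_le_lintegral₀ (hext.comp hnV).aemeasurable _
          _ ≤ ENNReal.ofReal C₀ := hmom _ (hεpos n)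
      have htail : (m Sᶜ).toReal ≤ M / ψ r := by
        have hdenom0 : ENNReal.ofReal (ψ r) ≠ 0 := (ENNReal.ofReal_pos.mpr hψrpos).ne'
        have h9 : m Sᶜ ≤ ENNReal.ofReal C₀ / ENNReal.ofReal (ψ r) := by
          rw [ENNReal.le_div_iff_mul_le (Or.inl hdenom0) (Or.inl ENNReal.ofReal_ne_top)]
          rw [mul_comm]
          exact hcheb
        have hfin : ENNReal.ofReal C₀ / ENNReal.ofReal (ψ r) ≠ ⊤ :=
          (ENNReal.div_lt_top ENNReal.ofReal_ne_top hdenom0).ne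
        have h10 := ENNReal.toReal_mono hfin h9
        rw [ENNReal.toReal_div, ENNReal.toReal_ofReal hψrpos.le] at h10
        have hnum : (ENNReal.ofReal C₀).toReal ≤ M := by
          calc (ENNReal.ofReal C₀).toReal ≤ (ENNReal.ofReal M).toReal :=
                ENNReal.toReal_mono ENNReal.ofReal_ne_top
                  (ENNReal.ofReal_le_ofReal (le_max_left _ _))
            _ = M := ENNReal.toReal_ofReal hM0
        refine le_trans h10 ?_
        gcongr
      have harith : δ/4 + (m Sᶜ).toReal * (2*C) < δ := by
        have h11 : (m Sᶜ).toReal * (2*C) ≤ (M / ψ r) * (2*C) :=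
          mul_le_mul_of_nonneg_right htail (by positivity)
        have h12 : (M / ψ r) * (2*C) ≤ δ/2 := by
          rw [div_mul_eq_mul_div, div_le_iff₀ hψrpos]
          have h13 := hψrδ
          rw [div_le_iff₀ hδ] at h13
          nlinarith
        linarith
      have hfinal : ∫ u, Pφ u ∂m - ∫ u, Pnφ u ∂m = ∫ u, g u ∂m :=
        (integral_sub hPφint hPnint).symm
      rw [Real.norm_eq_abs, hfinal]
      calc |∫ u, g u ∂m| ≤ δ/4 + (m Sᶜ).toReal * (2*C) := by rw [← h8]; exact h7
        _ < δ := harith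
    have h5 : Tendsto (fun n => ∫ u, ∫ v, φ v ∂(Pe (εseq n) u) ∂(με (εseq n))) atTop
        (𝓝 (∫ u, φ u ∂μ)) := hB.congr fun n => hBB n
    have h6 := hdiff.add h5
    rw [zero_add] at h6
    have h7 : Tendsto (fun n => ∫ u, Pφ u ∂(με (εseq n))) atTop (𝓝 (∫ u, φ u ∂μ)) :=
      h6.congr fun n => by ring
    exact tendsto_nhds_unique hA h7
  haveI : IsProbabilityMeasure (μ.bind (fun u => P u)) := by
    constructor
    rw [Measure.bind_apply MeasurableSet.univ P.measurable.aemeasurable]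
    simp
  exact ext_of_lipschitz_integral_eq _ _ (by simp) key
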